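/- For a prime p and integers 1 ≤ a < b, the number of automorphisms of Z_{p^a} × Z_{p^b} equals p^{3a+b}(1 − 1/p)^2, i.e., p^{3a+b−2}(p−1)^2. -/

import Mathlib

namespace CAux

lemma cast_mod_mul (p a b : ℕ) (hab : a ≤ b) (x : ℕ) :
    ((x % p ^ a : ℕ) : ZMod (p ^ b)) * (p : ZMod (p ^ b)) ^ (b - a)
      = (x : ZMod (p ^ b)) * (p : ZMod (p ^ b)) ^ (b - a) := by
  have hz : (p : ZMod (p ^ b)) ^ a * (p : ZMod (p ^ b)) ^ (b - a) = 0 := by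
    rw [← pow_add, Nat.add_sub_cancel' hab]
    exact_mod_cast (ZMod.natCast_self (p ^ b))
  conv_rhs => rw [← Nat.mod_add_div x (p ^ a)]
  push_cast
  rw [add_mul, show (p : ZMod (p ^ b)) ^ a * ((x / p ^ a : ℕ) : ZMod (p ^ b)) * (p : ZMod (p ^ b)) ^ (b - a)
      = ((x / p ^ a : ℕ) : ZMod (p ^ b)) * ((p : ZMod (p ^ b)) ^ a * (p : ZMod (p ^ b)) ^ (b - a)) from by ring,
    hz, mul_zero, add_zero]

def phiHom (p a b : ℕ) (hab : a ≤ b) [NeZero (p ^ a)] (u v : ZMod (p ^ a)) (c z : ZMod (p ^ b)) :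
    (ZMod (p ^ a) × ZMod (p ^ b)) →+ (ZMod (p ^ a) × ZMod (p ^ b)) where
  toFun t := (u * t.1 + v * ZMod.castHom (pow_dvd_pow p hab) (ZMod (p ^ a)) t.2,
      (t.1.val : ZMod (p ^ b)) * (p : ZMod (p ^ b)) ^ (b - a) * c + z * t.2)
  map_zero' := by simp
  map_add' s t := by
    have h2 : (((s.1 + t.1).val : ℕ) : ZMod (p ^ b)) * (p : ZMod (p ^ b)) ^ (b - a)
        = ((s.1.val + t.1.val : ℕ) : ZMod (p ^ b)) * (p : ZMod (p ^ b)) ^ (b - a) := by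
      rw [ZMod.val_add, cast_mod_mul p a b hab]
    ext
    · simp only [Prod.fst_add, Prod.snd_add, map_add]
      ring
    · simp only [Prod.fst_add, Prod.snd_add]
      rw [h2]
      push_cast
      ring

lemma phiHom_apply (p a b : ℕ) (hab : a ≤ b) [NeZero (p ^ a)] (u v : ZMod (p ^ a))
    (c z : ZMod (p ^ b)) (t : ZMod (p ^ a) × ZMod (p ^ b)) :
    phiHom p a b hab u v c z t
      = (u * t.1 + v * ZMod.castHom (pow_dvd_pow p hab) (ZMod (p ^ a)) t.2,
        (t.1.val : ZMod (p ^ b)) * (p : ZMod (p ^ b)) ^ (b - a) * c + z * t.2) := rfl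

lemma pcast_nilpotent (p m : ℕ) : IsNilpotent (p : ZMod (p ^ m)) :=
  ⟨m, by exact_mod_cast ZMod.natCast_self (p ^ m)⟩

lemma ppow_nilpotent (p m k : ℕ) (hk : k ≠ 0) : IsNilpotent ((p : ZMod (p ^ m)) ^ k) :=
  (pcast_nilpotent p m).pow_of_pos hk

-- cancellation: p^(b-a) * s.val determines s
lemma cancel_pow (p a b : ℕ) (hp : 0 < p) (hab : a ≤ b) [NeZero (p ^ a)] {s t : ZMod (p ^ a)}
    (h : ((p ^ (b - a) * s.val : ℕ) : ZMod (p ^ b)) = ((p ^ (b - a) * t.val : ℕ) : ZMod (p ^ b))) :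
    s = t := by
  have hb : p ^ (b - a) * p ^ a = p ^ b := by rw [← pow_add]; congr 1; omega
  have hs : p ^ (b - a) * s.val < p ^ b := by
    rw [← hb]; exact (Nat.mul_lt_mul_left (pow_pos hp _)).mpr (ZMod.val_lt s)
  have ht : p ^ (b - a) * t.val < p ^ b := by
    rw [← hb]; exact (Nat.mul_lt_mul_left (pow_pos hp _)).mpr (ZMod.val_lt t)
  have := congrArg ZMod.val h
  rw [ZMod.val_cast_of_lt hs, ZMod.val_cast_of_lt ht] at this
  have hval : s.val = t.val := Nat.eq_of_mul_eq_mul_left (pow_pos hp _) this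
  have := congrArg (Nat.cast : ℕ → ZMod (p ^ a)) hval
  rwa [ZMod.natCast_val, ZMod.natCast_val, ZMod.cast_id, ZMod.cast_id] at this

-- elements killed by p^a are multiples of p^(b-a)
lemma exists_rep (p a b : ℕ) (hp : 0 < p) (hab : a ≤ b) [NeZero (p ^ a)] [NeZero (p ^ b)]
    (t : ZMod (p ^ b)) (ht : ((p ^ a : ℕ) : ZMod (p ^ b)) * t = 0) :
    ∃ s : ZMod (p ^ a), t = (p : ZMod (p ^ b)) ^ (b - a) * ((s.val : ℕ) : ZMod (p ^ b)) := by
  have ht' : ((p ^ a * t.val : ℕ) : ZMod (p ^ b)) = 0 := by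
    push_cast
    rw [ZMod.natCast_val, ZMod.cast_id]
    exact_mod_cast ht
  rw [ZMod.natCast_eq_zero_iff] at ht'
  have hb : p ^ a * p ^ (b - a) = p ^ b := by rw [← pow_add]; congr 1; omega
  have hdvd : p ^ (b - a) ∣ t.val := by
    have : p ^ a * p ^ (b - a) ∣ p ^ a * t.val := by rw [hb]; exact ht'
    exact (mul_dvd_mul_iff_left (pow_ne_zero a hp.ne')).mp this
  obtain ⟨d, hd⟩ := hdvd
  have hdlt : d < p ^ a := by
    have : t.val < p ^ b := ZMod.val_lt t
    rw [hd, ← hb, mul_comm (p ^ a)] at this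
    exact lt_of_mul_lt_mul_left this (Nat.zero_le _)
  refine ⟨(d : ZMod (p ^ a)), ?_⟩
  rw [ZMod.val_cast_of_lt hdlt]
  have : t = ((t.val : ℕ) : ZMod (p ^ b)) := by rw [ZMod.natCast_val, ZMod.cast_id]
  rw [this, hd]
  push_cast
  ring

end CAux

namespace CAux

lemma phi_bijective (p a b : ℕ) (hab : a < b) [NeZero (p ^ a)] [NeZero (p ^ b)]
    (α : (ZMod (p ^ a))ˣ) (β γ : ZMod (p ^ a)) (δ : (ZMod (p ^ b))ˣ) :
    Function.Bijective (phiHom p a b hab.le (↑α) β ((γ.val : ℕ) : ZMod (p ^ b)) (↑δ)) := by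
  rw [← Finite.injective_iff_bijective, injective_iff_map_eq_zero]
  rintro ⟨x, y⟩ h
  rw [phiHom_apply, Prod.mk_eq_zero] at h
  obtain ⟨h1, h2⟩ := h
  set F := ZMod.castHom (pow_dvd_pow p hab.le) (ZMod (p ^ a)) with hF
  have h2' : (↑δ : ZMod (p ^ b)) * y
      = -((x.val : ZMod (p ^ b)) * (p : ZMod (p ^ b)) ^ (b - a) * ((γ.val : ℕ) : ZMod (p ^ b))) := by
    linear_combination h2
  have hy : y = ↑δ⁻¹ * -((x.val : ZMod (p ^ b)) * (p : ZMod (p ^ b)) ^ (b - a)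
      * ((γ.val : ℕ) : ZMod (p ^ b))) := by
    rw [← h2', ← mul_assoc, Units.inv_mul, one_mul]
  have hcy : F y = F ↑δ⁻¹ * -(x * (p : ZMod (p ^ a)) ^ (b - a) * ((γ.val : ℕ) : ZMod (p ^ a))) := by
    rw [hy, map_mul, map_neg, map_mul, map_mul, map_natCast, map_pow, map_natCast,
      ZMod.natCast_val, ZMod.cast_id]
    simp only [map_natCast]
  have hnilP : IsNilpotent ((p : ZMod (p ^ a)) ^ (b - a)) := ppow_nilpotent p a (b - a) (by omega)
  have hnil : IsNilpotent (-(β * F ↑δ⁻¹ * (p : ZMod (p ^ a)) ^ (b - a)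
      * ((γ.val : ℕ) : ZMod (p ^ a)))) := by
    refine IsNilpotent.neg ?_
    exact (Commute.all _ _).isNilpotent_mul_right ((Commute.all _ _).isNilpotent_mul_left hnilP)
  have hunit : IsUnit ((↑α : ZMod (p ^ a)) - β * F ↑δ⁻¹ * (p : ZMod (p ^ a)) ^ (b - a)
      * ((γ.val : ℕ) : ZMod (p ^ a))) := by
    rw [sub_eq_add_neg]
    exact hnil.isUnit_add_left_of_commute α.isUnit (Commute.all _ _)
  have hx0 : ((↑α : ZMod (p ^ a)) - β * F ↑δ⁻¹ * (p : ZMod (p ^ a)) ^ (b - a)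
      * ((γ.val : ℕ) : ZMod (p ^ a))) * x = 0 := by
    linear_combination h1 - β * hcy
  have hx : x = 0 := (hunit.mul_right_eq_zero).mp hx0
  have hyz : y = 0 := by
    rw [hy, hx]
    simp
  simp [hx, hyz]

end CAux

namespace CAux

lemma hom_rep (p a b : ℕ) [NeZero (p ^ a)] [NeZero (p ^ b)]
    (f : (ZMod (p ^ a) × ZMod (p ^ b)) →+ (ZMod (p ^ a) × ZMod (p ^ b)))
    (x : ZMod (p ^ a)) (y : ZMod (p ^ b)) :
    f (x, y) = x.val • f (1, 0) + y.val • f (0, 1) := by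
  have hx : (x, y) = x.val • ((1 : ZMod (p ^ a)), (0 : ZMod (p ^ b)))
      + y.val • ((0 : ZMod (p ^ a)), (1 : ZMod (p ^ b))) := by
    ext
    · simp [nsmul_eq_mul, ZMod.natCast_val, ZMod.cast_id]
    · simp [nsmul_eq_mul, ZMod.natCast_val, ZMod.cast_id]
  rw [hx, map_add, map_nsmul, map_nsmul]

lemma phi_surj (p a b : ℕ) (hp : 0 < p) (hab : a < b) [NeZero (p ^ a)] [NeZero (p ^ b)]
    (f : (ZMod (p ^ a) × ZMod (p ^ b)) →+ (ZMod (p ^ a) × ZMod (p ^ b)))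
    (hf : Function.Bijective f) :
    ∃ (α : (ZMod (p ^ a))ˣ) (β γ : ZMod (p ^ a)) (δ : (ZMod (p ^ b))ˣ),
      phiHom p a b hab.le (↑α) β ((γ.val : ℕ) : ZMod (p ^ b)) (↑δ) = f := by
  set F := ZMod.castHom (pow_dvd_pow p hab.le) (ZMod (p ^ a)) with hF
  -- the (2,1) entry is a multiple of p^(b-a)
  obtain ⟨s, hs⟩ : ∃ s : ZMod (p ^ a),
      (f (1, 0)).2 = (p : ZMod (p ^ b)) ^ (b - a) * ((s.val : ℕ) : ZMod (p ^ b)) := by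
    apply exists_rep p a b hp hab.le
    have h0 : (p ^ a : ℕ) • ((1 : ZMod (p ^ a)), (0 : ZMod (p ^ b))) = 0 := by
      ext
      · simp [nsmul_eq_mul]
      · simp
    calc ((p ^ a : ℕ) : ZMod (p ^ b)) * (f (1, 0)).2 = ((p ^ a : ℕ) • f (1, 0)).2 := by
          simp [nsmul_eq_mul]
      _ = (f ((p ^ a : ℕ) • (1, 0))).2 := by rw [map_nsmul]
      _ = 0 := by rw [h0, map_zero]; rfl
  have hba : (p : ZMod (p ^ b)) ^ (b - a) = p * (p : ZMod (p ^ b)) ^ (b - a - 1) := by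
    rw [← pow_succ']
    congr 1
    omega
  have hbaA : (p : ZMod (p ^ a)) ^ (b - a) = p * (p : ZMod (p ^ a)) ^ (b - a - 1) := by
    rw [← pow_succ']
    congr 1
    omega
  -- (2,2) entry is a unit
  have hδ : IsUnit (f (0, 1)).2 := by
    obtain ⟨⟨x, y⟩, hxy⟩ := hf.2 (0, 1)
    have h2 : (x.val : ZMod (p ^ b)) * (f (1, 0)).2 + y * (f (0, 1)).2 = 1 := by
      have h := congrArg Prod.snd hxy
      rw [hom_rep] at h
      simpa [nsmul_eq_mul, ZMod.natCast_val, ZMod.cast_id] using h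
    rw [hs, hba] at h2
    have h3 : y * (f (0, 1)).2
        = 1 + p * (-((x.val : ZMod (p ^ b)) * (p : ZMod (p ^ b)) ^ (b - a - 1)
          * ((s.val : ℕ) : ZMod (p ^ b)))) := by
      linear_combination h2
    have hnil : IsNilpotent ((p : ZMod (p ^ b))
        * (-((x.val : ZMod (p ^ b)) * (p : ZMod (p ^ b)) ^ (b - a - 1)
          * ((s.val : ℕ) : ZMod (p ^ b))))) :=
      (Commute.all _ _).isNilpotent_mul_right (pcast_nilpotent p b)
    have hu1 : IsUnit (y * (f (0, 1)).2) := by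
      rw [h3]
      exact hnil.isUnit_add_left_of_commute isUnit_one (Commute.all _ _)
    exact isUnit_of_mul_isUnit_right hu1
  -- (1,1) entry is a unit
  have hα : IsUnit (f (1, 0)).1 := by
    obtain ⟨⟨x, y⟩, hxy⟩ := hf.2 (1, 0)
    have h1 : x * (f (1, 0)).1 + F y * (f (0, 1)).1 = 1 := by
      have h := congrArg Prod.fst hxy
      rw [hom_rep] at h
      simpa [nsmul_eq_mul, ZMod.natCast_val, ZMod.cast_id, ZMod.castHom_apply, hF] using h
    have h2 : (x.val : ZMod (p ^ b)) * (f (1, 0)).2 + y * (f (0, 1)).2 = 0 := by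
      have h := congrArg Prod.snd hxy
      rw [hom_rep] at h
      simpa [nsmul_eq_mul, ZMod.natCast_val, ZMod.cast_id] using h
    rw [hs] at h2
    have h2' : (↑hδ.unit : ZMod (p ^ b)) * y
        = -((x.val : ZMod (p ^ b)) * (p : ZMod (p ^ b)) ^ (b - a)
          * ((s.val : ℕ) : ZMod (p ^ b))) := by
      rw [hδ.unit_spec]
      linear_combination h2
    have hy : y = ↑hδ.unit⁻¹ * -((x.val : ZMod (p ^ b)) * (p : ZMod (p ^ b)) ^ (b - a)
        * ((s.val : ℕ) : ZMod (p ^ b))) := by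
      rw [← h2', ← mul_assoc, Units.inv_mul, one_mul]
    have hcy : F y = F ↑hδ.unit⁻¹ * -(x * (p : ZMod (p ^ a)) ^ (b - a)
        * ((s.val : ℕ) : ZMod (p ^ a))) := by
      rw [hy, map_mul, map_neg, map_mul, map_mul, map_natCast, map_pow, map_natCast,
        ZMod.natCast_val, ZMod.cast_id]
      simp only [map_natCast]
    rw [hbaA] at hcy
    have h3 : x * (f (1, 0)).1
        = 1 + p * (F ↑hδ.unit⁻¹ * (x * (p : ZMod (p ^ a)) ^ (b - a - 1)
          * ((s.val : ℕ) : ZMod (p ^ a))) * (f (0, 1)).1) := by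
      linear_combination h1 - (f (0, 1)).1 * hcy
    have hnil : IsNilpotent ((p : ZMod (p ^ a))
        * (F ↑hδ.unit⁻¹ * (x * (p : ZMod (p ^ a)) ^ (b - a - 1)
          * ((s.val : ℕ) : ZMod (p ^ a))) * (f (0, 1)).1)) :=
      (Commute.all _ _).isNilpotent_mul_right (pcast_nilpotent p a)
    have hu1 : IsUnit (x * (f (1, 0)).1) := by
      rw [h3]
      exact hnil.isUnit_add_left_of_commute isUnit_one (Commute.all _ _)
    exact isUnit_of_mul_isUnit_right hu1
  refine ⟨hα.unit, (f (0, 1)).1, s, hδ.unit, ?_⟩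
  refine AddMonoidHom.ext fun t => ?_
  obtain ⟨x, y⟩ := t
  rw [phiHom_apply, hom_rep p a b f x y]
  have e1 := hα.unit_spec
  have e2 := hδ.unit_spec
  refine Prod.ext ?_ ?_
  · simp only [Prod.fst_add, Prod.smul_fst]
    simp only [nsmul_eq_mul, e1, ZMod.natCast_val, ZMod.cast_id, ZMod.castHom_apply]
    ring
  · simp only [Prod.snd_add, Prod.smul_snd]
    simp only [nsmul_eq_mul, e2, hs, ZMod.natCast_val, ZMod.cast_id]
    ring

end CAux

namespace CAux

noncomputable def paramEquiv (p a b : ℕ) (hp : 0 < p) (hpa : 1 < p ^ a) (hab : a < b)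
    [NeZero (p ^ a)] [NeZero (p ^ b)] :
    ((ZMod (p ^ a))ˣ × ZMod (p ^ a) × ZMod (p ^ a) × (ZMod (p ^ b))ˣ) ≃
      {f : (ZMod (p ^ a) × ZMod (p ^ b)) →+ (ZMod (p ^ a) × ZMod (p ^ b)) //
        Function.Bijective f} :=
  Equiv.ofBijective
    (fun q => ⟨phiHom p a b hab.le (↑q.1) q.2.1 ((q.2.2.1.val : ℕ) : ZMod (p ^ b)) (↑q.2.2.2),
      phi_bijective p a b hab q.1 q.2.1 q.2.2.1 q.2.2.2⟩)
    (by
      haveI : Fact (1 < p ^ a) := ⟨hpa⟩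
      constructor
      · rintro ⟨α, β, γ, δ⟩ ⟨α', β', γ', δ'⟩ h
        rw [Subtype.mk.injEq] at h
        have h01 := congrArg (fun g => g ((0 : ZMod (p ^ a)), (1 : ZMod (p ^ b)))) h
        have h10 := congrArg (fun g => g ((1 : ZMod (p ^ a)), (0 : ZMod (p ^ b)))) h
        simp only [phiHom_apply, mul_zero, mul_one, zero_add, add_zero, map_one, map_zero,
          ZMod.val_zero, ZMod.val_one, Nat.cast_zero, Nat.cast_one, zero_mul, one_mul,
          Prod.mk.injEq] at h01 h10
        obtain ⟨hβ, hδ⟩ := h01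
        obtain ⟨hα, hγ⟩ := h10
        have hγ' : γ = γ' := by
          apply cancel_pow p a b hp hab.le
          push_cast
          exact hγ
        exact Prod.ext (Units.ext hα) (Prod.ext hβ (Prod.ext hγ' (Units.ext hδ)))
      · rintro ⟨f, hf⟩
        obtain ⟨α, β, γ, δ, hphi⟩ := phi_surj p a b hp hab f hf
        exact ⟨⟨α, β, γ, δ⟩, Subtype.ext hphi⟩)

noncomputable def autEquivSub (M : Type*) [AddCommGroup M] :
    AddAut M ≃ {f : M →+ M // Function.Bijective f} where
  toFun g := ⟨g.toAddMonoidHom, g.bijective⟩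
  invFun f := AddEquiv.ofBijective f.1 f.2
  left_inv g := by
    ext x
    rfl
  right_inv f := Subtype.ext (AddMonoidHom.ext fun x => rfl)

end CAux


/-- For `1 ≤ a < b`, the number of automorphisms of `Z_{p^a} × Z_{p^b}` equals
`p^{3a+b}(1 - 1/p)^2 = p^{3a+b-2}(p-1)^2`. -/
theorem card_aut_zmod_prod_lt (p a b : ℕ) (hp : p.Prime) (ha : 1 ≤ a) (hab : a < b) :
    Nat.card (AddAut (ZMod (p ^ a) × ZMod (p ^ b))) = p ^ (3 * a + b - 2) * (p - 1) ^ 2 := by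
  haveI : NeZero (p ^ a) := ⟨(pow_pos hp.pos a).ne'⟩
  haveI : NeZero (p ^ b) := ⟨(pow_pos hp.pos b).ne'⟩
  have hpa : 1 < p ^ a := Nat.one_lt_pow (by omega) hp.one_lt
  rw [Nat.card_congr ((CAux.autEquivSub (ZMod (p ^ a) × ZMod (p ^ b))).trans
    (CAux.paramEquiv p a b hp.pos hpa hab).symm)]
  rw [Nat.card_prod, Nat.card_prod, Nat.card_prod]
  have cA : Nat.card (ZMod (p ^ a))ˣ = (p ^ a).totient := by
    rw [Nat.card_eq_fintype_card, ZMod.card_units_eq_totient]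
  have cB : Nat.card (ZMod (p ^ b))ˣ = (p ^ b).totient := by
    rw [Nat.card_eq_fintype_card, ZMod.card_units_eq_totient]
  rw [cA, cB, Nat.totient_prime_pow hp (by omega : 0 < a),
    Nat.totient_prime_pow hp (by omega : 0 < b)]
  obtain ⟨a', rfl⟩ : ∃ a', a = a' + 1 := ⟨a - 1, by omega⟩
  obtain ⟨b', rfl⟩ : ∃ b', b = b' + 2 := ⟨b - 2, by omega⟩
  have e1 : 3 * (a' + 1) + (b' + 2) - 2 = 3 * a' + b' + 3 := by omega
  have e2 : a' + 1 - 1 = a' := by omega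
  have e3 : b' + 2 - 1 = b' + 1 := by omega
  rw [e1, e2, e3]
  simp only [Nat.card_zmod]
  ring
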